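/- If μ₁, μ₂ ∈ M satisfy W∞(μ₁,μ₂) ≤ ε for some ε ≥ 0, then R_{μ₁}(x+ε) ≤ R_{μ₂}(x) ≤ R_{μ₁}(x−ε) for all x ∈ ℝ, and consequently |Eμ₁ − Eμ₂| ≤ ε. -/

import Mathlib

open MeasureTheory Filter Set
open scoped ENNReal

/-- Call function `R_μ(x) = ∫ (y−x)⁺ μ(dy)`. -/
noncomputable def callFn (μ : Measure ℝ) (x : ℝ) : ℝ := ∫ y, max (y - x) 0 ∂μ

/-- Mean `Eμ = ∫ y μ(dy)`. -/
noncomputable def meanM (μ : Measure ℝ) : ℝ := ∫ y, y ∂μ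

/-- Distribution function `F_μ(x) = μ((−∞,x])`. -/
noncomputable def cdfM (μ : Measure ℝ) (x : ℝ) : ℝ := (μ (Set.Iic x)).toReal

/-- Membership in `M`: Borel probability measure on ℝ with finite first moment. -/
def MemM (μ : Measure ℝ) : Prop :=
  IsProbabilityMeasure μ ∧ Integrable (fun y => y) μ

/-- Convex order `μ ≤_c ν`. -/
def ConvexOrder (μ ν : Measure ℝ) : Prop :=
  ∀ φ : ℝ → ℝ, ConvexOn ℝ Set.univ φ → Integrable φ μ → Integrable φ ν →
    ∫ y, φ y ∂μ ≤ ∫ y, φ y ∂ν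

/-- Infinity Wasserstein distance via distribution functions, valued in `[0,∞]`,
with `inf ∅ = ∞`. -/
noncomputable def Winf (μ ν : Measure ℝ) : ℝ≥0∞ :=
  sInf (ENNReal.ofReal '' {ε : ℝ | 0 < ε ∧ ∀ x : ℝ,
    cdfM μ (x - ε) ≤ cdfM ν x ∧ cdfM ν x ≤ cdfM μ (x + ε)})

/-- Membership in the closed ball `B^∞(μ,ε)` (within `M`). -/
def InBallWinf (μ : Measure ℝ) (ε : ℝ) (ν : Measure ℝ) : Prop :=
  MemM ν ∧ Winf μ ν ≤ ENNReal.ofReal ε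

/-- `conv2 f g`: the largest convex function majorized by `min f g`, pointwise. -/
noncomputable def conv2 (f g : ℝ → ℝ) (x : ℝ) : ℝ :=
  sSup {z : ℝ | ∃ h : ℝ → ℝ, ConvexOn ℝ Set.univ h ∧ (∀ y, h y ≤ min (f y) (g y)) ∧ z = h x}

/-- `R^min_μ(x; m, ε)`. -/
noncomputable def RminW (μ : Measure ℝ) (m ε x : ℝ) : ℝ :=
  max (m + callFn μ (x - ε) - (meanM μ + ε)) (callFn μ (x + ε))

/-- `R^max_μ(x; m, ε)`. -/
noncomputable def RmaxW (μ : Measure ℝ) (m ε x : ℝ) : ℝ :=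
  conv2 (fun y => m + callFn μ (y + ε) - (meanM μ - ε)) (fun y => callFn μ (y - ε)) x

/-- Right derivative. -/
noncomputable def rderiv (f : ℝ → ℝ) (x : ℝ) : ℝ := derivWithin f (Set.Ioi x) x

/-- `R` is a call function: convex, nonincreasing, tending to `0` at `+∞`, and
`R(x)+x` has a finite limit at `−∞`. -/
def IsCallFn (R : ℝ → ℝ) : Prop :=
  ConvexOn ℝ Set.univ R ∧ Antitone R ∧
    Tendsto R atTop (nhds 0) ∧ ∃ c : ℝ, Tendsto (fun x => R x + x) atBot (nhds c)

/-- Stop-loss distance, valued in `[0,∞]`. -/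
noncomputable def dSL (μ ν : Measure ℝ) : ℝ≥0∞ :=
  ⨆ x : ℝ, ENNReal.ofReal |callFn μ x - callFn ν x|

/-- Lévy distance. -/
noncomputable def dLevy (μ ν : Measure ℝ) : ℝ≥0∞ :=
  sInf (ENNReal.ofReal '' {h : ℝ | 0 < h ∧ ∀ x : ℝ,
    cdfM μ (x - h) - h ≤ cdfM ν x ∧ cdfM ν x ≤ cdfM μ (x + h) + h})

/-- Prokhorov distance on ℝ. -/
noncomputable def dProk (μ ν : Measure ℝ) : ℝ≥0∞ :=
  sInf (ENNReal.ofReal '' {h : ℝ | 0 < h ∧ ∀ A : Set ℝ, IsClosed A →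
    ν A ≤ μ (Metric.cthickening h A) + ENNReal.ofReal h})

/-- Modified Lévy distance with parameter `p`. -/
noncomputable def dLevyMod (p : ℝ) (μ ν : Measure ℝ) : ℝ≥0∞ :=
  sInf (ENNReal.ofReal '' {h : ℝ | 0 < h ∧ ∀ x : ℝ,
    cdfM μ (x - h) - p ≤ cdfM ν x ∧ cdfM ν x ≤ cdfM μ (x + h) + p})

/-- Modified Prokhorov distance with parameter `p`. -/
noncomputable def dProkMod (p : ℝ) (μ ν : Measure ℝ) : ℝ≥0∞ :=
  sInf (ENNReal.ofReal '' {h : ℝ | 0 < h ∧ ∀ A : Set ℝ, IsClosed A →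
    ν A ≤ μ (Metric.cthickening h A) + ENNReal.ofReal p})
section Aux

open MeasureTheory Filter Set
open scoped ENNReal

lemma integ_call (μ : Measure ℝ) (h : Integrable (fun y => y) μ) [IsProbabilityMeasure μ]
    (c : ℝ) : Integrable (fun y => max (y - c) 0) μ := by
  have : Integrable (fun y => y - c) μ := h.sub (integrable_const c)
  exact this.sup (integrable_const 0)

lemma lint_call (μ : Measure ℝ) (x : ℝ) :
    ∫⁻ y, ENNReal.ofReal (max (y - x) 0) ∂μ = ∫⁻ t in Ioi (0:ℝ), μ (Ioi (x + t)) := by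
  have hm : AEMeasurable (fun y : ℝ => max (y - x) 0) μ :=
    ((measurable_id.sub_const x).max measurable_const).aemeasurable
  rw [lintegral_eq_lintegral_meas_lt μ (f := fun y => max (y - x) 0)
    (Eventually.of_forall fun y => le_max_right _ _) hm]
  refine setLIntegral_congr_fun measurableSet_Ioi (fun t ht => ?_)
  congr 1
  ext y
  simp only [mem_setOf_eq, mem_Ioi, lt_max_iff]
  constructor
  · rintro (h | h)
    · linarith
    · exact absurd ht (by simpa using h.le)
  · intro h; left; linarith

lemma callFn_eq_toReal (μ : Measure ℝ) (h : Integrable (fun y => y) μ)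
    [IsProbabilityMeasure μ] (x : ℝ) :
    callFn μ x = (∫⁻ t in Ioi (0:ℝ), μ (Ioi (x + t))).toReal := by
  rw [← lint_call]
  exact integral_eq_lintegral_of_nonneg_ae (Eventually.of_forall fun y => le_max_right _ _)
    (integ_call μ h x).aestronglyMeasurable

lemma lint_call_lt_top (μ : Measure ℝ) (h : Integrable (fun y => y) μ)
    [IsProbabilityMeasure μ] (x : ℝ) :
    ∫⁻ t in Ioi (0:ℝ), μ (Ioi (x + t)) < ∞ := by
  rw [← lint_call]
  exact (hasFiniteIntegral_iff_ofReal (Eventually.of_forall fun y => le_max_right _ _)).mp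
    (integ_call μ h x).hasFiniteIntegral

/-- Key comparison: cdf domination implies call domination. -/
lemma call_le_of_cdf (μ₁ μ₂ : Measure ℝ) (h₁ : Integrable (fun y => y) μ₁)
    (h₂ : Integrable (fun y => y) μ₂)
    [IsProbabilityMeasure μ₁] [IsProbabilityMeasure μ₂] (δ : ℝ)
    (hc : ∀ z : ℝ, cdfM μ₁ (z - δ) ≤ cdfM μ₂ z) (x : ℝ) :
    callFn μ₂ x ≤ callFn μ₁ (x - δ) := by
  have key : ∀ z : ℝ, μ₂ (Ioi z) ≤ μ₁ (Ioi (z - δ)) := by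
    intro z
    have hcz := hc z
    rw [cdfM, cdfM, ENNReal.toReal_le_toReal (measure_ne_top _ _) (measure_ne_top _ _)] at hcz
    calc μ₂ (Ioi z) = 1 - μ₂ (Iic z) := by
          rw [← compl_Iic, prob_compl_eq_one_sub measurableSet_Iic]
      _ ≤ 1 - μ₁ (Iic (z - δ)) := tsub_le_tsub_left hcz 1
      _ = μ₁ (Ioi (z - δ)) := by
          rw [← compl_Iic, prob_compl_eq_one_sub measurableSet_Iic]
  rw [callFn_eq_toReal μ₁ h₁, callFn_eq_toReal μ₂ h₂]
  refine ENNReal.toReal_mono (lint_call_lt_top μ₁ h₁ _).ne (lintegral_mono fun t => ?_)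
  have := key (x + t)
  simpa [sub_add_eq_add_sub] using this

/-- Antitone. -/
lemma callFn_anti (μ : Measure ℝ) (h : Integrable (fun y => y) μ)
    [IsProbabilityMeasure μ] {a b : ℝ} (hab : a ≤ b) : callFn μ b ≤ callFn μ a := by
  refine integral_mono (integ_call μ h b) (integ_call μ h a) fun y => ?_
  exact max_le_max (by linarith) le_rfl

/-- Lipschitz. -/
lemma callFn_lip (μ : Measure ℝ) (h : Integrable (fun y => y) μ)
    [IsProbabilityMeasure μ] {a b : ℝ} (hab : a ≤ b) :
    callFn μ a ≤ callFn μ b + (b - a) := by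
  have : callFn μ a ≤ ∫ y, (max (y - b) 0 + (b - a)) ∂μ := by
    refine integral_mono (integ_call μ h a) ((integ_call μ h b).add (integrable_const _))
      fun y => ?_
    simp only [Pi.add_apply]
    rcases le_max_iff.mp (le_refl (max (y - a) 0)) with _ | _ <;>
    · rcases max_cases (y - b) 0 with ⟨h1, h2⟩ | ⟨h1, h2⟩ <;>
      rcases max_cases (y - a) 0 with ⟨h3, h4⟩ | ⟨h3, h4⟩ <;> rw [h1, h3] <;> linarith
  calc callFn μ a ≤ ∫ y, (max (y - b) 0 + (b - a)) ∂μ := this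
    _ = callFn μ b + (b - a) := by
        rw [integral_add (integ_call μ h b) (integrable_const _), integral_const]
        simp [callFn]

lemma int_max_eq (μ : Measure ℝ) (h : Integrable (fun y => y) μ)
    [IsProbabilityMeasure μ] (x : ℝ) :
    ∫ y, max y x ∂μ = callFn μ x + x := by
  have : ∀ y : ℝ, max y x = max (y - x) 0 + x := by
    intro y
    rcases max_cases y x with ⟨h1, h2⟩ | ⟨h1, h2⟩ <;>
    rcases max_cases (y - x) 0 with ⟨h3, h4⟩ | ⟨h3, h4⟩ <;> rw [h1, h3] <;> linarith
  simp_rw [this]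
  rw [integral_add (integ_call μ h x) (integrable_const _), integral_const]
  simp [callFn]

lemma mean_sub_le_call (μ : Measure ℝ) (h : Integrable (fun y => y) μ)
    [IsProbabilityMeasure μ] (x : ℝ) : meanM μ - x ≤ callFn μ x := by
  have : ∫ y, (y - x) ∂μ ≤ callFn μ x :=
    integral_mono (h.sub (integrable_const x)) (integ_call μ h x) fun y => le_max_left _ _
  rwa [integral_sub h (integrable_const x), integral_const, smul_eq_mul, probReal_univ,
    one_mul] at this

lemma tendsto_int_max (μ : Measure ℝ) (h : Integrable (fun y => y) μ)
    [IsProbabilityMeasure μ] :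
    Tendsto (fun x => ∫ y, max y x ∂μ) atBot (nhds (meanM μ)) := by
  refine tendsto_integral_filter_of_dominated_convergence (fun y => |y|)
    (Eventually.of_forall fun x =>
      ((measurable_id.max measurable_const).aestronglyMeasurable)) ?_ h.abs
    (Eventually.of_forall fun y => ?_)
  · filter_upwards [eventually_le_atBot (0:ℝ)] with x hx
    refine Eventually.of_forall fun y => ?_
    rw [Real.norm_eq_abs, abs_le]
    constructor
    · calc -|y| ≤ y := neg_abs_le y
        _ ≤ max y x := le_max_left _ _
    · exact max_le (le_abs_self y) (hx.trans (abs_nonneg y))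
  · have : ∀ᶠ x in atBot, max y x = y := by
      filter_upwards [eventually_le_atBot y] with x hx; exact max_eq_left hx
    exact Tendsto.congr' (Filter.EventuallyEq.symm this) tendsto_const_nhds

end Aux

/-- if `W∞(μ₁,μ₂) ≤ ε` then the call functions satisfy
`R_{μ₁}(x+ε) ≤ R_{μ₂}(x) ≤ R_{μ₁}(x−ε)` and `|Eμ₁ − Eμ₂| ≤ ε`. -/
theorem winf_le_imp_callFn_est (μ₁ μ₂ : Measure ℝ) (h₁ : MemM μ₁) (h₂ : MemM μ₂)
    (ε : ℝ) (hε : 0 ≤ ε) (h : Winf μ₁ μ₂ ≤ ENNReal.ofReal ε) :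
    (∀ x : ℝ, callFn μ₁ (x + ε) ≤ callFn μ₂ x ∧ callFn μ₂ x ≤ callFn μ₁ (x - ε)) ∧
    |meanM μ₁ - meanM μ₂| ≤ ε := by
  haveI := h₁.1
  haveI := h₂.1
  have hi₁ := h₁.2
  have hi₂ := h₂.2
  -- extraction of near-optimal δ
  have ext : ∀ η : ℝ, 0 < η → ∃ δ : ℝ, 0 < δ ∧
      (∀ x : ℝ, cdfM μ₁ (x - δ) ≤ cdfM μ₂ x ∧ cdfM μ₂ x ≤ cdfM μ₁ (x + δ)) ∧ δ < ε + η := by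
    intro η hη
    have hlt : Winf μ₁ μ₂ < ENNReal.ofReal (ε + η) :=
      lt_of_le_of_lt h (by rw [ENNReal.ofReal_lt_ofReal_iff (by linarith)]; linarith)
    rw [Winf, sInf_lt_iff] at hlt
    obtain ⟨a, ⟨δ, ⟨hδpos, hδprop⟩, rfl⟩, ha⟩ := hlt
    exact ⟨δ, hδpos, hδprop, by rwa [ENNReal.ofReal_lt_ofReal_iff (by linarith)] at ha⟩
  have upper : ∀ x : ℝ, callFn μ₂ x ≤ callFn μ₁ (x - ε) := by
    intro x
    refine le_of_forall_pos_le_add fun η hη => ?_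
    obtain ⟨δ, hδpos, hδprop, hδlt⟩ := ext η hη
    have h1 : callFn μ₂ x ≤ callFn μ₁ (x - δ) :=
      call_le_of_cdf μ₁ μ₂ hi₁ hi₂ δ (fun z => (hδprop z).1) x
    by_cases hδε : δ ≤ ε
    · have := callFn_anti μ₁ hi₁ (show x - ε ≤ x - δ by linarith)
      linarith
    · have := callFn_lip μ₁ hi₁ (show x - δ ≤ x - ε by linarith)
      linarith
  have lower : ∀ x : ℝ, callFn μ₁ (x + ε) ≤ callFn μ₂ x := by
    intro x
    refine le_of_forall_pos_le_add fun η hη => ?_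
    obtain ⟨δ, hδpos, hδprop, hδlt⟩ := ext η hη
    have hc : ∀ z : ℝ, cdfM μ₂ (z - δ) ≤ cdfM μ₁ z := by
      intro z
      have := (hδprop (z - δ)).2
      simpa [sub_add_cancel] using this
    have h1 : callFn μ₁ (x + δ) ≤ callFn μ₂ x := by
      have := call_le_of_cdf μ₂ μ₁ hi₂ hi₁ δ hc (x + δ)
      simpa using this
    by_cases hδε : ε ≤ δ
    · have := callFn_lip μ₁ hi₁ (show x + ε ≤ x + δ by linarith)
      linarith
    · have := callFn_anti μ₁ hi₁ (show x + δ ≤ x + ε by linarith)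
      linarith
  refine ⟨fun x => ⟨lower x, upper x⟩, ?_⟩
  have m1 : meanM μ₂ ≤ meanM μ₁ + ε := by
    have hb : ∀ x : ℝ, meanM μ₂ ≤ (∫ y, max y (x - ε) ∂μ₁) + ε := by
      intro x
      have e1 : meanM μ₂ - x ≤ callFn μ₂ x := mean_sub_le_call μ₂ hi₂ x
      have e2 := upper x
      have e3 : callFn μ₁ (x - ε) = (∫ y, max y (x - ε) ∂μ₁) - (x - ε) := by
        rw [int_max_eq μ₁ hi₁]; ring
      linarith
    have ht : Tendsto (fun x : ℝ => (∫ y, max y (x - ε) ∂μ₁) + ε) atBot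
        (nhds (meanM μ₁ + ε)) := by
      refine Tendsto.add_const ε ?_
      exact (tendsto_int_max μ₁ hi₁).comp ((tendsto_atBot_add_const_right atBot (-ε)
        tendsto_id).congr fun x => by simp [sub_eq_add_neg])
    exact ge_of_tendsto' ht hb
  have m2 : meanM μ₁ ≤ meanM μ₂ + ε := by
    have hb : ∀ x : ℝ, meanM μ₁ ≤ (∫ y, max y x ∂μ₂) + ε := by
      intro x
      have e1 : meanM μ₁ - (x + ε) ≤ callFn μ₁ (x + ε) := mean_sub_le_call μ₁ hi₁ (x + ε)
      have e2 := lower x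
      have e3 : callFn μ₂ x = (∫ y, max y x ∂μ₂) - x := by
        rw [int_max_eq μ₂ hi₂]; ring
      linarith
    have ht : Tendsto (fun x : ℝ => (∫ y, max y x ∂μ₂) + ε) atBot
        (nhds (meanM μ₂ + ε)) := Tendsto.add_const ε (tendsto_int_max μ₂ hi₂)
    exact ge_of_tendsto' ht hb
  rw [abs_sub_le_iff]
  constructor <;> linarith
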